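/- Let H be a finite-dimensional unimodular ribbon Hopf algebra with right integral λ. Suppose Σᵢ L_{xᵢ} ⊗ fᵢ : H ⊗ W → H ⊗ W' is an H-module morphism, where L_{xᵢ} denotes left multiplication by xᵢ ∈ H on the regular representation H, and fᵢ : W → W' are linear maps between H-modules. Then the linear map Σᵢ λ(xᵢ)·fᵢ : W → W' is an H-module morphism. -/

import Mathlib

open TensorProduct

/-- Convolution product on the dual of a Hopf algebra: `(f * g)(x) = f(x₍₁₎) g(x₍₂₎)`. -/
noncomputable def conv {k H : Type} [Field k] [Ring H] [HopfAlgebra k H]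
    (f g : H →ₗ[k] k) : H →ₗ[k] k :=
  (LinearMap.mul' k k) ∘ₗ (TensorProduct.map f g) ∘ₗ (Coalgebra.comul (R := k) (A := H))


namespace Stmt5Aux

open TensorProduct Coalgebra HopfAlgebra

variable {k H : Type} [Field k] [Ring H] [HopfAlgebra k H]

variable {k H : Type} [Field k] [Ring H] [HopfAlgebra k H]

lemma counit_left_sum {κ : Type*} {t : Finset κ} {u v : κ → H} {h : H}
    (hd : Coalgebra.comul (R := k) h = ∑ j ∈ t, u j ⊗ₜ[k] v j) :
    ∑ j ∈ t, Coalgebra.counit (R := k) (u j) • v j = h := by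
  have h1 := congrArg (fun z => (TensorProduct.lid k H)
    ((Coalgebra.counit (R := k) (A := H)).rTensor H z)) hd
  simpa using h1.symm

lemma counit_right_sum {κ : Type*} {t : Finset κ} {u v : κ → H} {h : H}
    (hd : Coalgebra.comul (R := k) h = ∑ j ∈ t, u j ⊗ₜ[k] v j) :
    ∑ j ∈ t, Coalgebra.counit (R := k) (v j) • u j = h := by
  have h1 := congrArg (fun z => (TensorProduct.rid k H)
    ((Coalgebra.counit (R := k) (A := H)).lTensor H z)) hd
  simpa using h1.symm

lemma antipode_left_sum {κ : Type*} {t : Finset κ} {u v : κ → H} {h : H}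
    (hd : Coalgebra.comul (R := k) h = ∑ j ∈ t, u j ⊗ₜ[k] v j) :
    ∑ j ∈ t, antipode (R := k) (u j) * v j = Coalgebra.counit (R := k) h • 1 := by
  have h1 := congrArg (fun z => LinearMap.mul' k H
    ((antipode (R := k) (A := H)).rTensor H z)) hd
  simp only [mul_antipode_rTensor_comul_apply, map_sum, LinearMap.rTensor_tmul,
    LinearMap.mul'_apply] at h1
  rw [← h1, Algebra.algebraMap_eq_smul_one]

lemma antipode_right_sum {κ : Type*} {t : Finset κ} {u v : κ → H} {h : H}
    (hd : Coalgebra.comul (R := k) h = ∑ j ∈ t, u j ⊗ₜ[k] v j) :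
    ∑ j ∈ t, u j * antipode (R := k) (v j) = Coalgebra.counit (R := k) h • 1 := by
  have h1 := congrArg (fun z => LinearMap.mul' k H
    ((antipode (R := k) (A := H)).lTensor H z)) hd
  simp only [mul_antipode_lTensor_comul_apply, map_sum, LinearMap.lTensor_tmul,
    LinearMap.mul'_apply] at h1
  rw [← h1, Algebra.algebraMap_eq_smul_one]

lemma coassoc_sum {κ κ' κ'' : Type*} {t : Finset κ} {u v : κ → H} {h : H}
    (hd : Coalgebra.comul (R := k) h = ∑ j ∈ t, u j ⊗ₜ[k] v j)
    {A : κ → Finset κ'} {aL aR : κ → κ' → H}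
    (hA : ∀ j ∈ t, Coalgebra.comul (R := k) (u j) = ∑ p ∈ A j, aL j p ⊗ₜ[k] aR j p)
    {B : κ → Finset κ''} {bL bR : κ → κ'' → H}
    (hB : ∀ j ∈ t, Coalgebra.comul (R := k) (v j) = ∑ q ∈ B j, bL j q ⊗ₜ[k] bR j q) :
    ∑ j ∈ t, ∑ p ∈ A j, aL j p ⊗ₜ[k] (aR j p ⊗ₜ[k] v j)
      = ∑ j ∈ t, ∑ q ∈ B j, u j ⊗ₜ[k] (bL j q ⊗ₜ[k] bR j q) := by
  have h1 := congrArg (fun z => (Coalgebra.comul (R := k) (A := H)).lTensor H z) hd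
  have h2 := congrArg (fun z => (TensorProduct.assoc k H H H)
    ((Coalgebra.comul (R := k) (A := H)).rTensor H z)) hd
  simp only [map_sum, LinearMap.lTensor_tmul, LinearMap.rTensor_tmul] at h1 h2
  rw [coassoc_apply, h1] at h2
  calc ∑ j ∈ t, ∑ p ∈ A j, aL j p ⊗ₜ[k] (aR j p ⊗ₜ[k] v j)
      = ∑ j ∈ t, (TensorProduct.assoc k H H H)
          ((Coalgebra.comul (R := k) (u j)) ⊗ₜ[k] v j) := by
        refine Finset.sum_congr rfl fun j hj => ?_
        rw [hA j hj, TensorProduct.sum_tmul, map_sum]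
        simp [TensorProduct.assoc_tmul]
    _ = ∑ j ∈ t, u j ⊗ₜ[k] Coalgebra.comul (R := k) (v j) := h2.symm
    _ = ∑ j ∈ t, ∑ q ∈ B j, u j ⊗ₜ[k] (bL j q ⊗ₜ[k] bR j q) := by
        refine Finset.sum_congr rfl fun j hj => ?_
        rw [hB j hj, TensorProduct.tmul_sum]

/-- apply a "trilinear" map to `H ⊗ (H ⊗ H)` -/
noncomputable def tri (L1 L2 L3 : H →ₗ[k] H) : H ⊗[k] (H ⊗[k] H) →ₗ[k] H :=
  LinearMap.mul' k H ∘ₗ (LinearMap.lTensor H (LinearMap.mul' k H)) ∘ₗ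
    (TensorProduct.map L1 (TensorProduct.map L2 L3))

@[simp] lemma tri_tmul (L1 L2 L3 : H →ₗ[k] H) (a b c : H) :
    tri L1 L2 L3 (a ⊗ₜ[k] (b ⊗ₜ[k] c)) = L1 a * (L2 b * L3 c) := by
  simp [tri]

lemma sum4_swap {α β γ δ M : Type*} [AddCommMonoid M] (sa : Finset α) (sb : Finset β)
    (fc : α → Finset γ) (fd : β → Finset δ) (F : α → γ → β → δ → M) :
    ∑ a ∈ sa, ∑ c ∈ fc a, ∑ b ∈ sb, ∑ d ∈ fd b, F a c b d
      = ∑ b ∈ sb, ∑ d ∈ fd b, ∑ a ∈ sa, ∑ c ∈ fc a, F a c b d :=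
  calc ∑ a ∈ sa, ∑ c ∈ fc a, ∑ b ∈ sb, ∑ d ∈ fd b, F a c b d
      = ∑ a ∈ sa, ∑ b ∈ sb, ∑ c ∈ fc a, ∑ d ∈ fd b, F a c b d :=
        Finset.sum_congr rfl fun _ _ => Finset.sum_comm
    _ = ∑ b ∈ sb, ∑ a ∈ sa, ∑ c ∈ fc a, ∑ d ∈ fd b, F a c b d := Finset.sum_comm
    _ = ∑ b ∈ sb, ∑ a ∈ sa, ∑ d ∈ fd b, ∑ c ∈ fc a, F a c b d :=
        Finset.sum_congr rfl fun _ _ => Finset.sum_congr rfl fun _ _ => Finset.sum_comm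
    _ = ∑ b ∈ sb, ∑ d ∈ fd b, ∑ a ∈ sa, ∑ c ∈ fc a, F a c b d :=
        Finset.sum_congr rfl fun _ _ => Finset.sum_comm

lemma antipode_one' : antipode (R := k) (1 : H) = 1 := by
  have h := mul_antipode_rTensor_comul_apply (R := k) (A := H) 1
  simpa [Algebra.TensorProduct.one_def] using h

local notation "S" => antipode (R := k) (A := H)
local notation "ε" => Coalgebra.counit (R := k) (A := H)

lemma antipode_mul' (a b : H) :
    antipode (R := k) (a * b) = antipode (R := k) b * antipode (R := k) a := by
  obtain ⟨D, hDs⟩ : ∃ D : H → Finset (H × H), ∀ y : H,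
      Coalgebra.comul (R := k) y = ∑ p ∈ D y, p.1 ⊗ₜ[k] p.2 :=
    ⟨fun y => (TensorProduct.exists_finset (R := k) (Coalgebra.comul (R := k) y)).choose,
     fun y => (TensorProduct.exists_finset (R := k) (Coalgebra.comul (R := k) y)).choose_spec⟩
  have hcol : ∀ y z : H,
      ∑ p ∈ D y, ∑ q ∈ D z, S (p.1 * q.1) * (p.2 * q.2) = (ε y * ε z) • (1 : H) := by
    intro y z
    have h0 : Coalgebra.comul (R := k) (y * z)
        = ∑ pq ∈ (D y) ×ˢ (D z), (pq.1.1 * pq.2.1) ⊗ₜ[k] (pq.1.2 * pq.2.2) := by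
      rw [Bialgebra.comul_mul, hDs y, hDs z, Finset.sum_mul_sum, Finset.sum_product]
      simp [Algebra.TensorProduct.tmul_mul_tmul]
    have h1 := antipode_left_sum (k := k) h0
    rw [Finset.sum_product] at h1
    rwa [Bialgebra.counit_mul] at h1
  -- eval 1
  have e1 : ∀ i j : H × H,
      (∑ p ∈ D i.2, ∑ q ∈ D j.2, S (i.1 * j.1) * (p.1 * (q.1 * (S q.2 * S p.2))))
        = (ε i.2 * ε j.2) • S (i.1 * j.1) := by
    intro i j
    have hq : ∀ p : H × H,
        (∑ q ∈ D j.2, S (i.1 * j.1) * (p.1 * (q.1 * (S q.2 * S p.2))))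
          = ε j.2 • (S (i.1 * j.1) * (p.1 * S p.2)) := by
      intro p
      calc ∑ q ∈ D j.2, S (i.1 * j.1) * (p.1 * (q.1 * (S q.2 * S p.2)))
          = ∑ q ∈ D j.2, (S (i.1 * j.1) * p.1) * ((q.1 * S q.2) * S p.2) :=
            Finset.sum_congr rfl fun q _ => by simp only [mul_assoc]
        _ = (S (i.1 * j.1) * p.1) * ((∑ q ∈ D j.2, q.1 * S q.2) * S p.2) := by
            rw [Finset.sum_mul, Finset.mul_sum]
        _ = ε j.2 • (S (i.1 * j.1) * (p.1 * S p.2)) := by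
            rw [antipode_right_sum (hDs j.2)]
            simp only [smul_mul_assoc, one_mul, mul_smul_comm, mul_assoc]
    calc (∑ p ∈ D i.2, ∑ q ∈ D j.2, S (i.1 * j.1) * (p.1 * (q.1 * (S q.2 * S p.2))))
        = ∑ p ∈ D i.2, ε j.2 • (S (i.1 * j.1) * (p.1 * S p.2)) :=
          Finset.sum_congr rfl fun p _ => hq p
      _ = ε j.2 • (S (i.1 * j.1) * (∑ p ∈ D i.2, p.1 * S p.2)) := by
          rw [Finset.mul_sum, Finset.smul_sum]
      _ = (ε i.2 * ε j.2) • S (i.1 * j.1) := by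
          rw [antipode_right_sum (hDs i.2), mul_smul_comm, mul_one, smul_smul, mul_comm]
  -- the canonical three-leg elements
  have Ea := coassoc_sum (hDs a) (fun i _ => hDs i.1) (fun i _ => hDs i.2)
  have Eb := coassoc_sum (hDs b) (fun j _ => hDs j.1) (fun j _ => hDs j.2)
  -- step A : for fixed j q, reshuffle the a-legs
  have stepA : ∀ j q : H × H,
      (∑ i ∈ D a, ∑ p ∈ D i.1, S (p.1 * j.1) * (p.2 * (q.1 * (S q.2 * S i.2))))
        = ∑ i ∈ D a, ∑ p ∈ D i.2, S (i.1 * j.1) * (p.1 * (q.1 * (S q.2 * S p.2))) := by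
    intro j q
    have h3 := congrArg (tri ((antipode (R := k)) ∘ₗ LinearMap.mulRight k j.1)
      LinearMap.id
      (LinearMap.mulLeft k q.1 ∘ₗ LinearMap.mulLeft k (S q.2) ∘ₗ (antipode (R := k)))) Ea
    simpa only [map_sum, tri_tmul, LinearMap.coe_comp, Function.comp_apply,
      LinearMap.mulRight_apply, LinearMap.mulLeft_apply, LinearMap.id_coe, id_eq] using h3
  -- step B : for fixed i p, reshuffle the b-legs
  have stepB : ∀ i p : H × H,
      (∑ j ∈ D b, ∑ q ∈ D j.1, S (p.1 * q.1) * (p.2 * (q.2 * (S j.2 * S i.2))))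
        = ∑ j ∈ D b, ∑ q ∈ D j.2, S (p.1 * j.1) * (p.2 * (q.1 * (S q.2 * S i.2))) := by
    intro i p
    have h3 := congrArg (tri ((antipode (R := k)) ∘ₗ LinearMap.mulLeft k p.1)
      (LinearMap.mulLeft k p.2)
      (LinearMap.mulRight k (S i.2) ∘ₗ (antipode (R := k)))) Eb
    simpa only [map_sum, tri_tmul, LinearMap.coe_comp, Function.comp_apply,
      LinearMap.mulRight_apply, LinearMap.mulLeft_apply, mul_assoc] using h3
  -- eval 2
  have e2 : (∑ i ∈ D a, ∑ j ∈ D b, ∑ p ∈ D i.2, ∑ q ∈ D j.2,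
        S (i.1 * j.1) * (p.1 * (q.1 * (S q.2 * S p.2))))
      = antipode (R := k) b * antipode (R := k) a := by
    calc (∑ i ∈ D a, ∑ j ∈ D b, ∑ p ∈ D i.2, ∑ q ∈ D j.2,
          S (i.1 * j.1) * (p.1 * (q.1 * (S q.2 * S p.2))))
        = ∑ i ∈ D a, ∑ p ∈ D i.2, ∑ j ∈ D b, ∑ q ∈ D j.2,
            S (i.1 * j.1) * (p.1 * (q.1 * (S q.2 * S p.2))) :=
          Finset.sum_congr rfl fun i _ => Finset.sum_comm
      _ = ∑ j ∈ D b, ∑ q ∈ D j.2, ∑ i ∈ D a, ∑ p ∈ D i.2,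
            S (i.1 * j.1) * (p.1 * (q.1 * (S q.2 * S p.2))) :=
          sum4_swap _ _ _ _ _
      _ = ∑ j ∈ D b, ∑ q ∈ D j.2, ∑ i ∈ D a, ∑ p ∈ D i.1,
            S (p.1 * j.1) * (p.2 * (q.1 * (S q.2 * S i.2))) :=
          Finset.sum_congr rfl fun j _ => Finset.sum_congr rfl fun q _ => (stepA j q).symm
      _ = ∑ i ∈ D a, ∑ p ∈ D i.1, ∑ j ∈ D b, ∑ q ∈ D j.2,
            S (p.1 * j.1) * (p.2 * (q.1 * (S q.2 * S i.2))) :=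
          sum4_swap _ _ _ _ _
      _ = ∑ i ∈ D a, ∑ p ∈ D i.1, ∑ j ∈ D b, ∑ q ∈ D j.1,
            S (p.1 * q.1) * (p.2 * (q.2 * (S j.2 * S i.2))) :=
          Finset.sum_congr rfl fun i _ => Finset.sum_congr rfl fun p _ => (stepB i p).symm
      _ = ∑ i ∈ D a, ∑ j ∈ D b, ∑ p ∈ D i.1, ∑ q ∈ D j.1,
            S (p.1 * q.1) * (p.2 * (q.2 * (S j.2 * S i.2))) :=
          Finset.sum_congr rfl fun i _ => Finset.sum_comm
      _ = ∑ i ∈ D a, ∑ j ∈ D b, (ε i.1 * ε j.1) • (S j.2 * S i.2) := by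
          refine Finset.sum_congr rfl fun i _ => Finset.sum_congr rfl fun j _ => ?_
          calc (∑ p ∈ D i.1, ∑ q ∈ D j.1, S (p.1 * q.1) * (p.2 * (q.2 * (S j.2 * S i.2))))
              = (∑ p ∈ D i.1, ∑ q ∈ D j.1, S (p.1 * q.1) * (p.2 * q.2)) * (S j.2 * S i.2) := by
                rw [Finset.sum_mul]
                refine Finset.sum_congr rfl fun p _ => ?_
                rw [Finset.sum_mul]
                exact Finset.sum_congr rfl fun q _ => by simp only [mul_assoc]
            _ = (ε i.1 * ε j.1) • (S j.2 * S i.2) := by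
                rw [hcol i.1 j.1, smul_mul_assoc, one_mul]
      _ = antipode (R := k) b * antipode (R := k) a := by
          have hb : antipode (R := k) b = ∑ j ∈ D b, ε j.1 • S j.2 := by
            conv_lhs => rw [← counit_left_sum (hDs b)]
            rw [map_sum]; exact Finset.sum_congr rfl fun j _ => by rw [map_smul]
          have ha : antipode (R := k) a = ∑ i ∈ D a, ε i.1 • S i.2 := by
            conv_lhs => rw [← counit_left_sum (hDs a)]
            rw [map_sum]; exact Finset.sum_congr rfl fun i _ => by rw [map_smul]
          rw [hb, ha, Finset.sum_mul_sum, Finset.sum_comm]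
          refine Finset.sum_congr rfl fun i _ => Finset.sum_congr rfl fun j _ => ?_
          rw [smul_mul_smul_comm, mul_comm (ε j.1) (ε i.1)]
  -- eval 1 gives S (a * b)
  have e1' : (∑ i ∈ D a, ∑ j ∈ D b, ∑ p ∈ D i.2, ∑ q ∈ D j.2,
        S (i.1 * j.1) * (p.1 * (q.1 * (S q.2 * S p.2))))
      = antipode (R := k) (a * b) := by
    calc (∑ i ∈ D a, ∑ j ∈ D b, ∑ p ∈ D i.2, ∑ q ∈ D j.2,
          S (i.1 * j.1) * (p.1 * (q.1 * (S q.2 * S p.2))))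
        = ∑ i ∈ D a, ∑ j ∈ D b, (ε i.2 * ε j.2) • S (i.1 * j.1) :=
          Finset.sum_congr rfl fun i _ => Finset.sum_congr rfl fun j _ => e1 i j
      _ = antipode (R := k) (a * b) := by
          have ha : a = ∑ i ∈ D a, ε i.2 • i.1 := (counit_right_sum (hDs a)).symm
          have hb : b = ∑ j ∈ D b, ε j.2 • j.1 := (counit_right_sum (hDs b)).symm
          conv_rhs => rw [ha, hb]
          rw [Finset.sum_mul_sum, map_sum]
          refine Finset.sum_congr rfl fun i _ => ?_
          rw [map_sum]
          refine Finset.sum_congr rfl fun j _ => ?_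
          rw [smul_mul_smul_comm, map_smul]
  rw [← e1', e2]

lemma cop_antipode_sum
    (hSbij : Function.Bijective (HopfAlgebra.antipode (R := k) (A := H)))
    {κ : Type*} {t : Finset κ} {u v : κ → H} {h : H}
    (hd : Coalgebra.comul (R := k) h = ∑ j ∈ t, u j ⊗ₜ[k] v j) :
    ∑ j ∈ t, v j * (LinearEquiv.ofBijective _ hSbij).symm (u j)
      = Coalgebra.counit (R := k) h • 1 := by
  apply hSbij.injective
  have hSSv : ∀ z : H, antipode (R := k) ((LinearEquiv.ofBijective _ hSbij).symm z) = z := by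
    intro z
    have h2 := (LinearEquiv.ofBijective _ hSbij).apply_symm_apply z
    simpa using h2
  calc antipode (R := k) (∑ j ∈ t, v j * (LinearEquiv.ofBijective _ hSbij).symm (u j))
      = ∑ j ∈ t, u j * antipode (R := k) (v j) := by
        rw [map_sum]
        refine Finset.sum_congr rfl fun j _ => ?_
        rw [antipode_mul', hSSv]
    _ = Coalgebra.counit (R := k) h • 1 := antipode_right_sum hd
    _ = antipode (R := k) (Coalgebra.counit (R := k) h • 1) := by
        rw [map_smul, antipode_one']

end Stmt5Aux

open TensorProduct Stmt5Aux

open Coalgebra HopfAlgebra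

/-- Let `H` be a finite-dimensional unimodular ribbon Hopf algebra with right integral `λ`
(satisfying the quantum character property). Suppose `Σᵢ L_{xᵢ} ⊗ fᵢ : H ⊗ W → H ⊗ W'` is an
`H`-module morphism, where `L_{xᵢ}` is left multiplication by `xᵢ` on the regular representation,
`fᵢ : W → W'` are linear maps between `H`-modules (given by representations `ρ`, `ρ'`), and
`H ⊗ W` carries the action `h · (c ⊗ w) = h₍₁₎ c ⊗ h₍₂₎ w` (expressed via Sweedler
representations of `Δ(h)`). Then `Σᵢ λ(xᵢ) • fᵢ : W → W'` is an `H`-module morphism. -/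
theorem stmt5 {k H W W' : Type} [Field k] [Ring H] [HopfAlgebra k H] [FiniteDimensional k H]
    [AddCommGroup W] [Module k W] [AddCommGroup W'] [Module k W']
    (ρ : H →ₐ[k] Module.End k W) (ρ' : H →ₐ[k] Module.End k W')
    (lam : H →ₗ[k] k)
    (hri : ∀ f : H →ₗ[k] k, conv f lam = f 1 • lam)
    (hqc : ∀ a b : H, lam (a * b) =
      lam (HopfAlgebra.antipode (R := k) (HopfAlgebra.antipode (R := k) b) * a))
    (hSbij : Function.Bijective (HopfAlgebra.antipode (R := k) (A := H)))
    (ι : Type) (s : Finset ι) (x : ι → H) (f : ι → (W →ₗ[k] W'))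
    (hmor : ∀ (h : H) (κ : Type) (t : Finset κ) (a b : κ → H),
      Coalgebra.comul (R := k) h = ∑ j ∈ t, a j ⊗ₜ[k] b j →
      (∑ i ∈ s, TensorProduct.map (LinearMap.mulLeft k (x i)) (f i)) ∘ₗ
          (∑ j ∈ t, TensorProduct.map (LinearMap.mulLeft k (a j)) (ρ (b j))) =
        (∑ j ∈ t, TensorProduct.map (LinearMap.mulLeft k (a j)) (ρ' (b j))) ∘ₗ
          (∑ i ∈ s, TensorProduct.map (LinearMap.mulLeft k (x i)) (f i))) :
    ∀ h : H,
      (∑ i ∈ s, lam (x i) • f i) ∘ₗ (ρ h : W →ₗ[k] W)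
        = (ρ' h : W' →ₗ[k] W') ∘ₗ (∑ i ∈ s, lam (x i) • f i) := by
  intro h
  have hSSv : ∀ z : H, antipode (R := k) ((LinearEquiv.ofBijective _ hSbij).symm z) = z := by
    intro z
    have h2 := (LinearEquiv.ofBijective _ hSbij).apply_symm_apply z
    simpa using h2
  obtain ⟨D, hDs⟩ : ∃ D : H → Finset (H × H), ∀ y : H,
      Coalgebra.comul (R := k) y = ∑ p ∈ D y, p.1 ⊗ₜ[k] p.2 :=
    ⟨fun y => (TensorProduct.exists_finset (R := k) (Coalgebra.comul (R := k) y)).choose,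
     fun y => (TensorProduct.exists_finset (R := k) (Coalgebra.comul (R := k) y)).choose_spec⟩
  set Sv : H →ₗ[k] H :=
    ((LinearEquiv.ofBijective _ hSbij).symm : H ≃ₗ[k] H).toLinearMap with hSv
  -- the canonical three-leg element of `h`
  have Eh := coassoc_sum (hDs h) (fun n _ => hDs n.1) (fun n _ => hDs n.2)
  -- I1
  have I1 : ∑ n ∈ D h, ∑ q ∈ D n.2, (q.1 * Sv n.1) ⊗ₜ[k] q.2 = (1 : H) ⊗ₜ[k] h := by
    set Θ : H ⊗[k] (H ⊗[k] H) →ₗ[k] H ⊗[k] H :=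
      (LinearMap.rTensor H (LinearMap.mul' k H ∘ₗ LinearMap.lTensor H Sv ∘ₗ
        (TensorProduct.comm k H H).toLinearMap)) ∘ₗ
        (TensorProduct.assoc k H H H).symm.toLinearMap with hΘ
    have hΘt : ∀ a b c : H, Θ (a ⊗ₜ[k] (b ⊗ₜ[k] c)) = (b * Sv a) ⊗ₜ[k] c := by
      intro a b c
      simp [hΘ]
    have h3 := congrArg Θ Eh
    simp only [map_sum, hΘt] at h3
    calc ∑ n ∈ D h, ∑ q ∈ D n.2, (q.1 * Sv n.1) ⊗ₜ[k] q.2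
        = ∑ n ∈ D h, ∑ p ∈ D n.1, (p.2 * Sv p.1) ⊗ₜ[k] n.2 := h3.symm
      _ = ∑ n ∈ D h, (Coalgebra.counit (R := k) n.1 • (1 : H)) ⊗ₜ[k] n.2 := by
          refine Finset.sum_congr rfl fun n _ => ?_
          rw [← TensorProduct.sum_tmul, hSv]
          simp only [LinearEquiv.coe_coe, LinearEquiv.coe_toLinearMap]
          rw [cop_antipode_sum hSbij (hDs n.1)]
      _ = (1 : H) ⊗ₜ[k] h := by
          conv_rhs => rw [← counit_left_sum (hDs h)]
          rw [TensorProduct.tmul_sum]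
          exact Finset.sum_congr rfl fun n _ => by
            rw [← TensorProduct.smul_tmul', TensorProduct.tmul_smul]
  have I2 : ∑ n ∈ D h, ∑ q ∈ D n.2,
      (antipode (R := k) n.1 * q.1) ⊗ₜ[k] q.2 = (1 : H) ⊗ₜ[k] h := by
    set Θ : H ⊗[k] (H ⊗[k] H) →ₗ[k] H ⊗[k] H :=
      (LinearMap.rTensor H (LinearMap.mul' k H ∘ₗ
        LinearMap.rTensor H (antipode (R := k)))) ∘ₗ
        (TensorProduct.assoc k H H H).symm.toLinearMap with hΘ
    have hΘt : ∀ a b c : H, Θ (a ⊗ₜ[k] (b ⊗ₜ[k] c)) = (antipode (R := k) a * b) ⊗ₜ[k] c := by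
      intro a b c
      simp [hΘ]
    have h3 := congrArg Θ Eh
    simp only [map_sum, hΘt] at h3
    calc ∑ n ∈ D h, ∑ q ∈ D n.2, (antipode (R := k) n.1 * q.1) ⊗ₜ[k] q.2
        = ∑ n ∈ D h, ∑ p ∈ D n.1, (antipode (R := k) p.1 * p.2) ⊗ₜ[k] n.2 := h3.symm
      _ = ∑ n ∈ D h, (Coalgebra.counit (R := k) n.1 • (1 : H)) ⊗ₜ[k] n.2 := by
          refine Finset.sum_congr rfl fun n _ => ?_
          rw [← TensorProduct.sum_tmul, antipode_left_sum (hDs n.1)]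
      _ = (1 : H) ⊗ₜ[k] h := by
          conv_rhs => rw [← counit_left_sum (hDs h)]
          rw [TensorProduct.tmul_sum]
          exact Finset.sum_congr rfl fun n _ => by
            rw [← TensorProduct.smul_tmul', TensorProduct.tmul_smul]
  -- Claim 1
  have C1 : ∀ y : H, ∑ n ∈ D h, ∑ q ∈ D n.2, lam (y * (q.1 * Sv n.1)) • q.2
      = lam y • h := by
    intro y
    set μ : H ⊗[k] H →ₗ[k] H := (TensorProduct.lid k H).toLinearMap ∘ₗ
      (TensorProduct.map (lam ∘ₗ LinearMap.mulLeft k y) LinearMap.id) with hμ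
    have hμt : ∀ c z : H, μ (c ⊗ₜ[k] z) = lam (y * c) • z := by
      intro c z; simp [hμ]
    have h4 := congrArg μ I1
    simp only [map_sum, hμt] at h4
    rw [h4, mul_one]
  -- Claim 2
  have C2 : ∀ y : H, ∑ n ∈ D h, ∑ q ∈ D n.2, lam (q.1 * (y * Sv n.1)) • q.2
      = lam y • h := by
    intro y
    have hsc : ∀ n q : H × H, lam (q.1 * (y * Sv n.1))
        = lam ((antipode (R := k) n.1 * q.1) * y) := by
      intro n q
      rw [← mul_assoc, hqc (q.1 * y) (Sv n.1)]
      rw [show antipode (R := k) (Sv n.1) = n.1 from ?_, mul_assoc]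
      · have := hSSv n.1
        rw [hSv]
        simpa using this
    set ν : H ⊗[k] H →ₗ[k] H := (TensorProduct.lid k H).toLinearMap ∘ₗ
      (TensorProduct.map (lam ∘ₗ LinearMap.mulRight k y) LinearMap.id) with hν
    have hνt : ∀ c z : H, ν (c ⊗ₜ[k] z) = lam (c * y) • z := by
      intro c z; simp [hν]
    have h4 := congrArg ν I2
    simp only [map_sum, hνt] at h4
    calc ∑ n ∈ D h, ∑ q ∈ D n.2, lam (q.1 * (y * Sv n.1)) • q.2
        = ∑ n ∈ D h, ∑ q ∈ D n.2, lam ((antipode (R := k) n.1 * q.1) * y) • q.2 :=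
          Finset.sum_congr rfl fun n _ => Finset.sum_congr rfl fun q _ => by rw [hsc n q]
      _ = lam (1 * y) • h := h4
      _ = lam y • h := by rw [one_mul]
  -- the pairing map on the output side
  set Λ : H ⊗[k] W' →ₗ[k] W' := (TensorProduct.lid k W').toLinearMap ∘ₗ
    (TensorProduct.map lam LinearMap.id) with hΛ
  have hΛt : ∀ (c : H) (z : W'), Λ (c ⊗ₜ[k] z) = lam c • z := by
    intro c z; simp [hΛ]
  apply LinearMap.ext; intro w
  have En : ∀ n : H × H,
      (∑ q ∈ D n.2, ∑ i ∈ s, lam (x i * (q.1 * Sv n.1)) • f i ((ρ q.2) w))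
        = ∑ i ∈ s, ∑ q ∈ D n.2, lam (q.1 * (x i * Sv n.1)) • (ρ' q.2) (f i w) := by
    intro n
    have hm := hmor n.2 (H × H) (D n.2) Prod.fst Prod.snd (hDs n.2)
    have h5 := congrArg (fun g : H ⊗[k] W →ₗ[k] H ⊗[k] W' => Λ (g (Sv n.1 ⊗ₜ[k] w))) hm
    simp only [LinearMap.coe_comp, Function.comp_apply, LinearMap.sum_apply, map_sum,
      TensorProduct.map_tmul, LinearMap.mulLeft_apply, LinearMap.id_coe, id_eq, hΛt] at h5
    exact h5
  -- final assembly
  simp only [LinearMap.coe_comp, Function.comp_apply, LinearMap.sum_apply,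
    LinearMap.smul_apply, map_sum, map_smul]
  calc ∑ i ∈ s, lam (x i) • f i ((ρ h) w)
      = ∑ i ∈ s, ∑ n ∈ D h, ∑ q ∈ D n.2,
          lam (x i * (q.1 * Sv n.1)) • f i ((ρ q.2) w) := by
        refine Finset.sum_congr rfl fun i _ => ?_
        have h6 := congrArg (fun z : H => f i ((ρ z) w)) (C1 (x i))
        simp only [map_sum, map_smul, LinearMap.sum_apply, LinearMap.smul_apply] at h6
        exact h6.symm
    _ = ∑ n ∈ D h, ∑ i ∈ s, ∑ q ∈ D n.2,
          lam (x i * (q.1 * Sv n.1)) • f i ((ρ q.2) w) := Finset.sum_comm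
    _ = ∑ n ∈ D h, ∑ q ∈ D n.2, ∑ i ∈ s,
          lam (x i * (q.1 * Sv n.1)) • f i ((ρ q.2) w) :=
        Finset.sum_congr rfl fun n _ => Finset.sum_comm
    _ = ∑ n ∈ D h, ∑ i ∈ s, ∑ q ∈ D n.2,
          lam (q.1 * (x i * Sv n.1)) • (ρ' q.2) (f i w) :=
        Finset.sum_congr rfl fun n _ => En n
    _ = ∑ i ∈ s, ∑ n ∈ D h, ∑ q ∈ D n.2,
          lam (q.1 * (x i * Sv n.1)) • (ρ' q.2) (f i w) := Finset.sum_comm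
    _ = ∑ i ∈ s, lam (x i) • (ρ' h) (f i w) := by
        refine Finset.sum_congr rfl fun i _ => ?_
        have h6 := congrArg (fun z : H => (ρ' z) (f i w)) (C2 (x i))
        simp only [map_sum, map_smul, LinearMap.sum_apply, LinearMap.smul_apply] at h6
        exact h6
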